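/- Second-order expansion of the L^q norm at the constant function: let (X,μ) be a measure space with 0 < μ(X) < ∞ and let q > 2. Then for every ε > 0 there exists δ > 0 such that for every real-valued φ ∈ L^q(μ) with ∫ φ dμ = 0 and ‖φ‖_{L^q} ≤ δ, one has | ‖1+φ‖_{L^q}² − μ(X)^{2/q} − (q−1)·μ(X)^{2/q−1}·‖φ‖_{L²}² | ≤ ε ‖φ‖_{L^q}². -/

import Mathlib

open MeasureTheory Set

section Aux

lemma lq_aux_mvt_abs {f f' : ℝ → ℝ} {r C : ℝ}
    (hder : ∀ s ∈ Icc (-r) r, HasDerivAt f (f' s) s)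
    (h0 : f 0 = 0)
    (hbound : ∀ s ∈ Icc (-r) r, |f' s| ≤ C) :
    ∀ t ∈ Icc (-r) r, |f t| ≤ C * |t| := by
  intro t ht
  have h0m : (0:ℝ) ∈ Icc (-r) r := by
    constructor <;> [linarith [ht.1, ht.2]; linarith [ht.1, ht.2]]
  have := Convex.norm_image_sub_le_of_norm_hasDerivWithin_le
    (f := f) (f' := f') (s := Icc (-r) r)
    (fun x hx => (hder x hx).hasDerivWithinAt) hbound (convex_Icc _ _) h0m ht
  simpa [h0, Real.norm_eq_abs] using this

lemma lq_aux_mvt_sq {f f' : ℝ → ℝ} {r C : ℝ}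
    (hder : ∀ s ∈ Icc (-r) r, HasDerivAt f (f' s) s)
    (h0 : f 0 = 0)
    (hbound : ∀ s ∈ Icc (-r) r, |f' s| ≤ C * |s|) :
    ∀ t ∈ Icc (-r) r, |f t| ≤ C * t ^ 2 := by
  intro t ht
  rcases eq_or_ne t 0 with rfl | htne
  · simp [h0]
  have habs : |t| ≤ r := abs_le.mpr ⟨ht.1, ht.2⟩
  have hsub : Icc (-|t|) |t| ⊆ Icc (-r) r := Icc_subset_Icc (by linarith) habs
  have hC : 0 ≤ C := by
    have h1 := hbound t ht
    have h2 : 0 < |t| := abs_pos.mpr htne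
    nlinarith [abs_nonneg (f' t)]
  have key := lq_aux_mvt_abs (r := |t|) (C := C * |t|)
    (fun s hs => hder s (hsub hs)) h0
    (fun s hs => by
      refine (hbound s (hsub hs)).trans ?_
      have : |s| ≤ |t| := abs_le.mpr ⟨hs.1, hs.2⟩
      nlinarith)
    t (by constructor <;> [exact neg_abs_le t; exact le_abs_self t])
  calc |f t| ≤ C * |t| * |t| := key
    _ = C * t ^ 2 := by rw [mul_assoc, ← abs_mul, ← sq, abs_sq]

lemma lq_aux_rpow_le_max {a x lo hi : ℝ} (hlo : 0 < lo) (h1 : lo ≤ x) (h2 : x ≤ hi) :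
    x ^ a ≤ max (lo ^ a) (hi ^ a) := by
  rcases le_or_gt 0 a with ha | ha
  · exact le_max_of_le_right (Real.rpow_le_rpow (by linarith) h2 ha)
  · exact le_max_of_le_left (Real.rpow_le_rpow_of_nonpos hlo h1 ha.le)

lemma lq_aux_taylor_rpow {a b : ℝ} (hb : 0 < b) :
    ∀ t ∈ Icc (-(b/2)) (b/2),
      |(b + t) ^ a - b ^ a - a * b ^ (a-1) * t| ≤
        (|a * (a-1)| * max ((b/2) ^ (a-2)) ((3*b/2) ^ (a-2))) * t ^ 2 := by
  set C := |a * (a-1)| * max ((b/2) ^ (a-2)) ((3*b/2) ^ (a-2)) with hC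
  have hpos : ∀ s ∈ Icc (-(b/2)) (b/2), b/2 ≤ b + s ∧ b + s ≤ 3*b/2 := by
    intro s hs; exact ⟨by linarith [hs.1], by linarith [hs.2]⟩
  have hder1 : ∀ s ∈ Icc (-(b/2)) (b/2),
      HasDerivAt (fun t => a * (b + t) ^ (a-1) - a * b ^ (a-1))
        (a * (a-1) * (b + s) ^ (a-2)) s := by
    intro s hs
    have h1 : HasDerivAt (fun t : ℝ => b + t) 1 s := (hasDerivAt_id s).const_add b
    have hne : b + s ≠ 0 := ne_of_gt (by linarith [(hpos s hs).1, half_pos hb])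
    have h2 := (h1.rpow_const (p := a - 1) (Or.inl hne)).const_mul a
    have : (a - 1 - 1) = a - 2 := by ring
    convert h2.sub_const (a * b ^ (a-1)) using 1
    · rfl
    · rfl
    rw [this]; ring
  refine lq_aux_mvt_sq (f' := fun s => a * (b + s) ^ (a-1) - a * b ^ (a-1)) ?_ (by simp) ?_
  · intro s hs
    have h1 : HasDerivAt (fun t : ℝ => b + t) 1 s := (hasDerivAt_id s).const_add b
    have hne : b + s ≠ 0 := ne_of_gt (by linarith [(hpos s hs).1, half_pos hb])
    have h2 := h1.rpow_const (p := a) (Or.inl hne)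
    have h3 := (h2.sub_const (b ^ a)).sub ((hasDerivAt_id s).const_mul (a * b ^ (a-1)))
    convert h3 using 1
    · rfl
    · rfl
    · rfl
    ring
  · intro s hs
    refine lq_aux_mvt_abs (f' := fun u => a * (a-1) * (b + u) ^ (a-2)) hder1 (by simp) ?_ s hs
    intro u hu
    rw [abs_mul]
    have h1 : |(b + u) ^ (a-2)| = (b + u) ^ (a-2) :=
      abs_of_nonneg (Real.rpow_nonneg (by linarith [(hpos u hu).1, half_pos hb]) _)
    rw [h1, hC]
    have := lq_aux_rpow_le_max (a := a-2) (half_pos hb) (hpos u hu).1 (hpos u hu).2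
    have habs : (0:ℝ) ≤ |a * (a-1)| := abs_nonneg _
    nlinarith

/-- Small-argument Taylor bound. -/
lemma lq_aux_taylor_small {q : ℝ} (hq : 2 < q) {η : ℝ} (hη : 0 < η) (hη2 : η ≤ 1/2) :
    ∀ t ∈ Icc (-η) η,
      |(1+t) ^ q - 1 - q * t - q*(q-1)/2 * t^2| ≤
        (q*(q-1)*((q-2) * max ((1/2:ℝ) ^ (q-3)) ((3/2:ℝ) ^ (q-3)))) * η * t^2 := by
  set L : ℝ := (q-2) * max ((1/2:ℝ) ^ (q-3)) ((3/2:ℝ) ^ (q-3)) with hL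
  have hmem : ∀ s ∈ Icc (-η) η, (1:ℝ)/2 ≤ 1 + s ∧ 1 + s ≤ 3/2 := by
    intro s hs; exact ⟨by linarith [hs.1], by linarith [hs.2]⟩
  have hne : ∀ s ∈ Icc (-η) η, (1:ℝ) + s ≠ 0 := fun s hs =>
    ne_of_gt (by linarith [(hmem s hs).1])
  have hL0 : 0 ≤ L := by
    have : (0:ℝ) < max ((1/2:ℝ) ^ (q-3)) ((3/2:ℝ) ^ (q-3)) :=
      lt_max_of_lt_left (Real.rpow_pos_of_pos (by norm_num) _)
    rw [hL]; nlinarith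
  have step1 : ∀ s ∈ Icc (-η) η, |(1+s) ^ (q-2) - 1| ≤ L * η := by
    intro s hs
    have h := lq_aux_mvt_abs (r := η) (C := L)
      (f := fun s => (1+s) ^ (q-2) - 1) (f' := fun s => (q-2) * (1+s) ^ (q-3))
      (fun u hu => by
        have h1 : HasDerivAt (fun t : ℝ => 1 + t) 1 u := (hasDerivAt_id u).const_add 1
        have h2 := (h1.rpow_const (p := q-2) (Or.inl (hne u hu))).sub_const 1
        convert h2 using 1
        · rfl
        · rfl
        have h3 : q - 2 - 1 = q - 3 := by ring
        rw [h3]; ring)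
      (by simp)
      (fun u hu => by
        rw [abs_mul, abs_of_nonneg (by linarith : (0:ℝ) ≤ q - 2), hL]
        have hb := lq_aux_rpow_le_max (a := q-3) (by norm_num : (0:ℝ) < 1/2)
          (hmem u hu).1 (hmem u hu).2
        have h5 : |(1+u) ^ (q-3)| = (1+u) ^ (q-3) :=
          abs_of_nonneg (Real.rpow_nonneg (by linarith [(hmem u hu).1]) _)
        rw [h5]
        nlinarith) s hs
    refine h.trans ?_
    have : |s| ≤ η := abs_le.mpr ⟨hs.1, hs.2⟩
    nlinarith
  have step2 : ∀ s ∈ Icc (-η) η,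
      |q * (1+s) ^ (q-1) - q - q*(q-1) * s| ≤ (q*(q-1)*L*η) * |s| := by
    intro s hs
    have h := lq_aux_mvt_abs (r := η) (C := q*(q-1)*L*η)
      (f := fun s => q * (1+s) ^ (q-1) - q - q*(q-1) * s)
      (f' := fun s => q*(q-1) * ((1+s) ^ (q-2) - 1))
      (fun u hu => by
        have h1 : HasDerivAt (fun t : ℝ => 1 + t) 1 u := (hasDerivAt_id u).const_add 1
        have h2 := ((h1.rpow_const (p := q-1) (Or.inl (hne u hu))).const_mul q).sub_const q
        have h3 := h2.sub ((hasDerivAt_id u).const_mul (q*(q-1)))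
        convert h3 using 1
        · rfl
        · rfl
        · rfl
        have h4 : q - 1 - 1 = q - 2 := by ring
        rw [h4]; ring)
      (by simp)
      (fun u hu => by
        rw [abs_mul, abs_of_nonneg (by nlinarith : (0:ℝ) ≤ q*(q-1))]
        calc q*(q-1) * |(1+u) ^ (q-2) - 1| ≤ q*(q-1) * (L*η) :=
              mul_le_mul_of_nonneg_left (step1 u hu) (by nlinarith)
          _ = q*(q-1)*L*η := by ring) s hs
    simpa using h
  intro t ht
  have h := lq_aux_mvt_sq (r := η) (C := q*(q-1)*L*η)
    (f := fun t => (1+t) ^ q - 1 - q * t - q*(q-1)/2 * t^2)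
    (f' := fun s => q * (1+s) ^ (q-1) - q - q*(q-1) * s)
    (fun u hu => by
      have h1 : HasDerivAt (fun t : ℝ => 1 + t) 1 u := (hasDerivAt_id u).const_add 1
      have h2 := (h1.rpow_const (p := q) (Or.inl (hne u hu))).sub_const 1
      have h3 := h2.sub ((hasDerivAt_id u).const_mul q)
      have h4 := h3.sub ((hasDerivAt_pow 2 u).const_mul (q*(q-1)/2))
      convert h4 using 1
      · rfl
      · rfl
      · rfl
      push_cast
      ring)
    (by norm_num)
    step2 t ht
  calc |(1+t) ^ q - 1 - q * t - q*(q-1)/2 * t^2| ≤ (q*(q-1)*L*η) * t^2 := h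
    _ = (q*(q-1)*L) * η * t^2 := by ring

/-- Large-argument bound. -/
lemma lq_aux_taylor_large {q : ℝ} (hq : 2 < q) {η : ℝ} (hη : 0 < η) :
    ∀ t : ℝ, η ≤ |t| →
      abs (|1+t| ^ q - 1 - q * t - q*(q-1)/2 * t^2) ≤
        ((1+1/η) ^ q + 1/η^q + q/η^(q-1) + (q*(q-1)/2)/η^(q-2)) * |t| ^ q := by
  intro t hu
  set u := |t| with hudef
  have hu0 : 0 < u := lt_of_lt_of_le hη hu
  have huq : (0:ℝ) < u ^ q := Real.rpow_pos_of_pos hu0 _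
  have hmono : ∀ a : ℝ, 0 ≤ a → η ^ a ≤ u ^ a := fun a ha => Real.rpow_le_rpow hη.le hu ha
  have hsplit : ∀ a : ℝ, 0 ≤ a → a ≤ q → u ^ a * η ^ (q - a) ≤ u ^ q := by
    intro a ha haq
    have h1 : η ^ (q-a) ≤ u ^ (q-a) := hmono _ (by linarith)
    have h2 : u ^ a * η ^ (q-a) ≤ u ^ a * u ^ (q-a) :=
      mul_le_mul_of_nonneg_left h1 (Real.rpow_nonneg hu0.le _)
    have h3 : u ^ a * u ^ (q-a) = u ^ q := by
      rw [← Real.rpow_add hu0]; ring_nf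
    linarith [h2, h3.le]
  have T1 : |1+t| ^ q ≤ (1+1/η) ^ q * u ^ q := by
    have h1 : |1+t| ≤ (1+1/η) * u := by
      have : |1+t| ≤ 1 + u := (abs_add_le 1 t).trans (by simp [hudef])
      have h2 : 1 ≤ u / η := (one_le_div hη).mpr hu
      calc |1+t| ≤ 1 + u := this
        _ ≤ u/η + u := by linarith [(one_le_div hη).mpr hu, hu0]
        _ = (1+1/η) * u := by field_simp; ring
    calc |1+t| ^ q ≤ ((1+1/η) * u) ^ q :=
          Real.rpow_le_rpow (abs_nonneg _) h1 (by linarith)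
      _ = (1+1/η) ^ q * u ^ q := Real.mul_rpow (by positivity) hu0.le
  have T2 : (1:ℝ) ≤ u ^ q / η ^ q := by
    rw [le_div_iff₀ (Real.rpow_pos_of_pos hη _)]
    have := hsplit 0 le_rfl (by linarith)
    simpa using this
  have T3 : u ≤ u ^ q / η ^ (q-1) := by
    rw [le_div_iff₀ (Real.rpow_pos_of_pos hη _)]
    have := hsplit 1 zero_le_one (by linarith)
    simpa [Real.rpow_one] using this
  have T4 : t ^ 2 ≤ u ^ q / η ^ (q-2) := by
    rw [le_div_iff₀ (Real.rpow_pos_of_pos hη _)]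
    have := hsplit 2 (by norm_num) (by linarith)
    rw [Real.rpow_two] at this
    calc t ^ 2 * η ^ (q-2) = u ^ 2 * η ^ (q-2) := by rw [← sq_abs]
      _ ≤ u ^ q := this
  have habs : abs (|1+t| ^ q - 1 - q * t - q*(q-1)/2 * t^2)
      ≤ |1+t| ^ q + 1 + q * |t| + q*(q-1)/2 * t^2 := by
    have h1 : (0:ℝ) ≤ |1+t| ^ q := Real.rpow_nonneg (abs_nonneg _) _
    have h2 := le_abs_self t
    have h3 := neg_abs_le t
    have hq0 : (0:ℝ) ≤ q := by linarith
    have hA : (0:ℝ) ≤ q * (|t| + t) := mul_nonneg hq0 (by linarith)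
    have hB : (0:ℝ) ≤ q * (|t| - t) := mul_nonneg hq0 (by linarith)
    have hC : (0:ℝ) ≤ q*(q-1)/2 * t^2 := mul_nonneg (by nlinarith) (sq_nonneg t)
    rw [abs_le]
    constructor <;> nlinarith
  refine habs.trans ?_
  have hq0 : (0:ℝ) ≤ q := by linarith
  have hc2 : (0:ℝ) ≤ q*(q-1)/2 := by nlinarith
  have e3 : q * u ≤ q * (u ^ q / η ^ (q-1)) := mul_le_mul_of_nonneg_left T3 hq0
  have e4 : q*(q-1)/2 * t^2 ≤ q*(q-1)/2 * (u ^ q / η ^ (q-2)) :=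
    mul_le_mul_of_nonneg_left T4 hc2
  have expand : ((1+1/η) ^ q + 1/η^q + q/η^(q-1) + (q*(q-1)/2)/η^(q-2)) * u ^ q
      = (1+1/η) ^ q * u ^ q + u ^ q/η^q + q * (u ^ q/η^(q-1)) + q*(q-1)/2 * (u ^ q/η^(q-2)) := by
    ring
  rw [expand]
  linarith [T1, T2, e3, e4]

lemma lq_aux_norm_rpow_eq {X : Type*} [MeasurableSpace X] {μ : Measure X} {f : X → ℝ} {q : ℝ}
    (hq : 0 < q) (hf : MemLp f (ENNReal.ofReal q) μ) :
    ((eLpNorm f (ENNReal.ofReal q) μ).toReal) ^ q = ∫ x, |f x| ^ q ∂μ := by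
  have hp0 : ENNReal.ofReal q ≠ 0 := by
    simp [ENNReal.ofReal_eq_zero, not_le, hq]
  have h := hf.eLpNorm_eq_integral_rpow_norm hp0 ENNReal.ofReal_ne_top
  have htr : (ENNReal.ofReal q).toReal = q := ENNReal.toReal_ofReal hq.le
  rw [htr] at h
  have hInonneg : 0 ≤ ∫ x, ‖f x‖ ^ q ∂μ :=
    integral_nonneg fun x => Real.rpow_nonneg (norm_nonneg _) _
  rw [h, ENNReal.toReal_ofReal (Real.rpow_nonneg hInonneg _),
    ← Real.rpow_mul hInonneg, inv_mul_cancel₀ (ne_of_gt hq), Real.rpow_one]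
  simp [Real.norm_eq_abs]

lemma lq_aux_norm_sq_eq {X : Type*} [MeasurableSpace X] {μ : Measure X} {f : X → ℝ} {q : ℝ}
    (hq : 0 < q) (hf : MemLp f (ENNReal.ofReal q) μ) :
    ((eLpNorm f (ENNReal.ofReal q) μ).toReal) ^ 2 = (∫ x, |f x| ^ q ∂μ) ^ (2/q) := by
  have hp0 : ENNReal.ofReal q ≠ 0 := by
    simp [ENNReal.ofReal_eq_zero, not_le, hq]
  have h := hf.eLpNorm_eq_integral_rpow_norm hp0 ENNReal.ofReal_ne_top
  have htr : (ENNReal.ofReal q).toReal = q := ENNReal.toReal_ofReal hq.le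
  rw [htr] at h
  have hInonneg : 0 ≤ ∫ x, ‖f x‖ ^ q ∂μ :=
    integral_nonneg fun x => Real.rpow_nonneg (norm_nonneg _) _
  have habs : (∫ x, ‖f x‖ ^ q ∂μ) = ∫ x, |f x| ^ q ∂μ := by simp [Real.norm_eq_abs]
  rw [h, ENNReal.toReal_ofReal (Real.rpow_nonneg hInonneg _), ← Real.rpow_two,
    ← Real.rpow_mul hInonneg, habs] at *
  congr 1
  field_simp

lemma lq_aux_norm2_sq_eq {X : Type*} [MeasurableSpace X] {μ : Measure X} {f : X → ℝ}
    (hf : MemLp f 2 μ) :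
    ((eLpNorm f 2 μ).toReal) ^ 2 = ∫ x, (f x) ^ 2 ∂μ := by
  have h := hf.eLpNorm_eq_integral_rpow_norm two_ne_zero ENNReal.ofNat_ne_top
  have htr : (2 : ENNReal).toReal = (2:ℝ) := by norm_num
  rw [htr] at h
  have hInonneg : 0 ≤ ∫ x, ‖f x‖ ^ (2:ℝ) ∂μ :=
    integral_nonneg fun x => Real.rpow_nonneg (norm_nonneg _) _
  have habs : (∫ x, ‖f x‖ ^ (2:ℝ) ∂μ) = ∫ x, (f x) ^ 2 ∂μ := by
    simp [Real.norm_eq_abs, Real.rpow_two, sq_abs]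
  rw [h, ENNReal.toReal_ofReal (Real.rpow_nonneg hInonneg _), ← Real.rpow_two,
    ← Real.rpow_mul hInonneg]
  rw [habs] at *
  norm_num

end Aux

set_option maxHeartbeats 1000000

/-- **Second-order expansion of the `L^q` norm at the constant function `1`:**
on a measure space of finite positive mass, for `q > 2`, for every `ε > 0` there is
`δ > 0` such that every mean-zero real `φ ∈ L^q(μ)` with `‖φ‖_q ≤ δ` satisfies
`| ‖1+φ‖_q² - μ(X)^{2/q} - (q-1) μ(X)^{2/q-1} ‖φ‖₂² | ≤ ε ‖φ‖_q²`. -/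
theorem lq_norm_second_order_expansion {X : Type*} [MeasurableSpace X] (μ : Measure X)
    (hpos : 0 < μ Set.univ) (hfin : μ Set.univ < ⊤) (q : ℝ) (hq : 2 < q) :
    ∀ ε : ℝ, 0 < ε → ∃ δ : ℝ, 0 < δ ∧ ∀ φ : X → ℝ,
      MemLp φ (ENNReal.ofReal q) μ → ∫ x, φ x ∂μ = 0 →
      (eLpNorm φ (ENNReal.ofReal q) μ).toReal ≤ δ →
      |(eLpNorm (fun x => 1 + φ x) (ENNReal.ofReal q) μ).toReal ^ 2 -
          (μ Set.univ).toReal ^ (2 / q) -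
          (q - 1) * (μ Set.univ).toReal ^ (2 / q - 1) * (eLpNorm φ 2 μ).toReal ^ 2| ≤
        ε * (eLpNorm φ (ENNReal.ofReal q) μ).toReal ^ 2 := by
  intro ε hε
  haveI : IsFiniteMeasure μ := ⟨hfin⟩
  set p := ENNReal.ofReal q with hpdef
  have hq0 : (0:ℝ) < q := by linarith
  have hp0 : p ≠ 0 := by simp [hpdef, ENNReal.ofReal_eq_zero, not_le, hq0]
  have hpt : p ≠ ⊤ := ENNReal.ofReal_ne_top
  have hptr : p.toReal = q := ENNReal.toReal_ofReal hq0.le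
  set m := (μ Set.univ).toReal with hmdef
  have hm : 0 < m := ENNReal.toReal_pos hpos.ne' hfin.ne
  clear_value m
  -- constants
  set K : ℝ := q*(q-1)*((q-2) * max ((1/2:ℝ) ^ (q-3)) ((3/2:ℝ) ^ (q-3))) with hKdef
  have hK0 : 0 ≤ K := by
    have h : (0:ℝ) ≤ max ((1/2:ℝ) ^ (q-3)) ((3/2:ℝ) ^ (q-3)) :=
      le_max_of_le_left (Real.rpow_nonneg (by norm_num) _)
    rw [hKdef]
    exact mul_nonneg (by nlinarith) (mul_nonneg (by linarith) h)
  set B : ℝ := m ^ (1 - 2/q) with hBdef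
  have hB : 0 < B := Real.rpow_pos_of_pos hm _
  clear_value K
  set c1 : ℝ := 2/q * m ^ (2/q - 1) with hc1def
  have hc1 : 0 < c1 := mul_pos (by positivity) (Real.rpow_pos_of_pos hm _)
  set c2 : ℝ := q*(q-1)/2 with hc2def
  have hc2 : 0 < c2 := by rw [hc2def]; nlinarith
  set C2 : ℝ := |2/q * (2/q - 1)| * max ((m/2) ^ (2/q - 2)) ((3*m/2) ^ (2/q - 2)) with hC2def
  have hC2 : 0 ≤ C2 := by
    rw [hC2def]
    exact mul_nonneg (abs_nonneg _)
      (le_trans (Real.rpow_nonneg (by positivity) _) (le_max_left _ _))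
  clear_value B c1 c2 C2
  -- choose η
  have hden1 : (0:ℝ) < 3*(c1*K*B) + 1 := by linarith only [mul_nonneg (mul_nonneg hc1.le hK0) hB.le]
  set η : ℝ := min (1/2) (ε / (3*(c1*K*B) + 1)) with hηdef
  have hη : 0 < η := lt_min (by norm_num) (div_pos hε hden1)
  have hη2 : η ≤ 1/2 := min_le_left _ _
  have hηε : c1*K*B*η ≤ ε/3 := by
    have h1 : η ≤ ε / (3*(c1*K*B) + 1) := min_le_right _ _
    have h2 : c1*K*B*η ≤ c1*K*B * (ε/(3*(c1*K*B)+1)) :=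
      mul_le_mul_of_nonneg_left h1 (mul_nonneg (mul_nonneg hc1.le hK0) hB.le)
    have h3 : c1*K*B * (ε/(3*(c1*K*B)+1)) ≤ ε/3 := by
      rw [mul_div_assoc', div_le_div_iff₀ hden1 (by norm_num : (0:ℝ) < 3)]
      linarith only [hε, mul_nonneg (mul_nonneg (mul_nonneg hc1.le hK0) hB.le) hε.le]
    linarith only [h2, h3]
  -- large constant
  clear_value η
  set Cb : ℝ := (1+1/η)^q + 1/η^q + q/η^(q-1) + c2/η^(q-2) with hCbdef
  have hCb : 0 < Cb := by
    rw [hCbdef]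
    have h1 : (0:ℝ) < (1+1/η)^q :=
      Real.rpow_pos_of_pos (by linarith [one_div_pos.mpr hη]) _
    have h2 : (0:ℝ) < 1/η^q := one_div_pos.mpr (Real.rpow_pos_of_pos hη _)
    have h3 : (0:ℝ) < q/η^(q-1) := div_pos hq0 (Real.rpow_pos_of_pos hη _)
    have h4 : (0:ℝ) < c2/η^(q-2) := div_pos hc2 (Real.rpow_pos_of_pos hη _)
    linarith only [h1, h2, h3, h4]
  set D0 : ℝ := (c2 + K*η)*B + Cb with hD0def
  have hD0 : 0 < D0 := by
    rw [hD0def]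
    have : 0 < (c2 + K*η)*B := mul_pos (by linarith only [hc2, mul_nonneg hK0 hη.le]) hB
    linarith only [this, hCb]
  clear_value Cb D0
  -- choose δ
  have hden2 : (0:ℝ) < 2*D0 + 1 := by linarith only [hD0]
  have hden3 : (0:ℝ) < 3*C2*D0^2 + 1 := by linarith [mul_nonneg hC2 (sq_nonneg D0)]
  have hden4 : (0:ℝ) < 3*c1*Cb + 1 := by linarith [mul_nonneg hc1.le hCb.le]
  set δ : ℝ := min 1 (min (m/(2*D0+1))
      (min (ε/(3*C2*D0^2+1)) ((ε/(3*c1*Cb+1)) ^ (1/(q-2))))) with hδdef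
  have hδpos : 0 < δ := by
    refine lt_min one_pos (lt_min (div_pos hm hden2) (lt_min (div_pos hε hden3) ?_))
    exact Real.rpow_pos_of_pos (div_pos hε hden4) _
  have hδ1 : δ ≤ 1 := min_le_left _ _
  have hδb0 : δ ≤ m/(2*D0+1) := le_trans (min_le_right _ _) (min_le_left _ _)
  have hδc0 : δ ≤ ε/(3*C2*D0^2+1) :=
    le_trans (min_le_right _ _) (le_trans (min_le_right _ _) (min_le_left _ _))
  have hδd0 : δ ≤ (ε/(3*c1*Cb+1)) ^ (1/(q-2)) :=
    le_trans (min_le_right _ _) (le_trans (min_le_right _ _) (min_le_right _ _))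
  have hδb : D0*δ ≤ m/2 := by
    have h1 : D0*δ ≤ D0*(m/(2*D0+1)) := mul_le_mul_of_nonneg_left hδb0 hD0.le
    have h2 : D0*(m/(2*D0+1)) ≤ m/2 := by
      rw [mul_div_assoc', div_le_div_iff₀ hden2 (by norm_num : (0:ℝ) < 2)]
      linarith only [hm, mul_pos hD0 hm]
    linarith only [h1, h2]
  have hδc : C2*D0^2*δ ≤ ε/3 := by
    have h1 : C2*D0^2*δ ≤ C2*D0^2*(ε/(3*C2*D0^2+1)) :=
      mul_le_mul_of_nonneg_left hδc0 (mul_nonneg hC2 (sq_nonneg D0))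
    have h2 : C2*D0^2*(ε/(3*C2*D0^2+1)) ≤ ε/3 := by
      rw [mul_div_assoc', div_le_div_iff₀ hden3 (by norm_num : (0:ℝ) < 3)]
      linarith only [hε, mul_nonneg (mul_nonneg hC2 (sq_nonneg D0)) hε.le]
    linarith only [h1, h2]
  have hδd : c1*Cb*δ^(q-2) ≤ ε/3 := by
    have hq2 : (0:ℝ) ≤ q - 2 := by linarith
    have hδq : δ^(q-2) ≤ ε/(3*c1*Cb+1) := by
      calc δ^(q-2) ≤ ((ε/(3*c1*Cb+1)) ^ (1/(q-2)))^(q-2) :=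
            Real.rpow_le_rpow hδpos.le hδd0 hq2
        _ = ε/(3*c1*Cb+1) := by
            rw [← Real.rpow_mul (le_of_lt (div_pos hε hden4)), one_div,
              inv_mul_cancel₀ (by linarith : q - 2 ≠ 0), Real.rpow_one]
    have h1 : c1*Cb*δ^(q-2) ≤ c1*Cb*(ε/(3*c1*Cb+1)) :=
      mul_le_mul_of_nonneg_left hδq (mul_nonneg hc1.le hCb.le)
    have h2 : c1*Cb*(ε/(3*c1*Cb+1)) ≤ ε/3 := by
      rw [mul_div_assoc', div_le_div_iff₀ hden4 (by norm_num : (0:ℝ) < 3)]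
      linarith only [hε, mul_nonneg (mul_nonneg hc1.le hCb.le) hε.le]
    linarith only [h1, h2]
  clear_value δ
  refine ⟨δ, hδpos, ?_⟩
  intro φ hφq hmean hδφ
  set t := (eLpNorm φ p μ).toReal with htdef
  have ht0 : 0 ≤ t := ENNReal.toReal_nonneg
  have hφae := hφq.aestronglyMeasurable
  by_cases htz : t = 0
  · -- degenerate case : φ = 0 a.e.
    have hzero : eLpNorm φ p μ = 0 := by
      rcases (ENNReal.toReal_eq_zero_iff _).mp htz with h | h
      · exact h
      · exact absurd h hφq.2.ne
    have hφ0 : φ =ᵐ[μ] 0 := (eLpNorm_eq_zero_iff hφae hp0).mp hzero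
    have h2zero : eLpNorm φ 2 μ = 0 := by
      rw [eLpNorm_congr_ae hφ0, eLpNorm_zero]
    have hone : eLpNorm (fun x => 1 + φ x) p μ = eLpNorm (fun _ : X => (1:ℝ)) p μ :=
      eLpNorm_congr_ae (hφ0.mono fun x hx => by simp [hx])
    have hμne : μ ≠ 0 := by
      intro h; rw [h] at hpos; simp at hpos
    rw [htz, hone, h2zero, eLpNorm_const (1:ℝ) hp0 hμne]
    have htoR : (‖(1:ℝ)‖ₑ * μ Set.univ ^ (1 / p.toReal)).toReal = m ^ (1/q) := by
      rw [ENNReal.toReal_mul, hptr, ← ENNReal.toReal_rpow]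
      simp [hmdef]
    rw [htoR]
    have hpow : (m ^ ((1:ℝ)/q)) ^ 2 = m ^ (2/q) := by
      rw [← Real.rpow_two, ← Real.rpow_mul hm.le]
      ring_nf
    rw [hpow]
    simp
  · have htpos : 0 < t := lt_of_le_of_ne ht0 (Ne.symm htz)
    -- integrability
    have h2le : (2:ENNReal) ≤ p := by
      rw [hpdef, show (2:ENNReal) = ENNReal.ofReal 2 by simp]
      exact ENNReal.ofReal_le_ofReal hq.le
    have hφ2 : MemLp φ 2 μ := hφq.mono_exponent h2le
    have hint_sq : Integrable (fun x => φ x ^ 2) μ := hφ2.integrable_sq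
    have hintφ : Integrable φ μ := hφ2.integrable one_le_two
    have h1φ : MemLp (fun x => 1 + φ x) p μ := (memLp_const (1:ℝ)).add hφq
    have hint_q : Integrable (fun x => |φ x| ^ q) μ := by
      have := hφq.integrable_norm_rpow hp0 hpt
      simpa [hptr, Real.norm_eq_abs] using this
    have hint_1q : Integrable (fun x => |1 + φ x| ^ q) μ := by
      have := h1φ.integrable_norm_rpow hp0 hpt
      simpa [hptr, Real.norm_eq_abs] using this
    -- real quantities
    set S : ℝ := ∫ x, φ x ^ 2 ∂μ with hSdef
    set T : ℝ := ∫ x, |φ x| ^ q ∂μ with hTdef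
    set A : ℝ := ∫ x, |1 + φ x| ^ q ∂μ with hAdef
    have hS0 : 0 ≤ S := integral_nonneg fun x => sq_nonneg _
    have hT0 : 0 ≤ T := integral_nonneg fun x => Real.rpow_nonneg (abs_nonneg _) _
    have hSnorm : (eLpNorm φ 2 μ).toReal ^ 2 = S := lq_aux_norm2_sq_eq hφ2
    have hTnorm : t ^ q = T := lq_aux_norm_rpow_eq hq0 hφq
    have hAnorm : (eLpNorm (fun x => 1 + φ x) p μ).toReal ^ 2 = A ^ (2/q) :=
      lq_aux_norm_sq_eq hq0 h1φ
    -- pointwise bound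
    have hptwise : ∀ x : X, abs (|1 + φ x| ^ q - 1 - q * φ x - c2 * φ x ^ 2)
        ≤ K*η*φ x^2 + Cb*|φ x|^q := by
      intro x
      rcases le_or_gt (|φ x|) η with hcase | hcase
      · have hb := abs_le.mp hcase
        have habs1 : |1 + φ x| = 1 + φ x := abs_of_pos (by linarith [hb.1])
        have := lq_aux_taylor_small hq hη hη2 (φ x) ⟨hb.1, hb.2⟩
        rw [habs1]
        have hnn : 0 ≤ Cb*|φ x|^q :=
          mul_nonneg hCb.le (Real.rpow_nonneg (abs_nonneg _) _)
        rw [← hKdef, ← hc2def] at this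
        calc abs ((1 + φ x) ^ q - 1 - q * φ x - c2 * φ x ^ 2) ≤ K * η * φ x ^ 2 := this
          _ ≤ K*η*φ x^2 + Cb*|φ x|^q := by linarith only [hnn]
      · have := lq_aux_taylor_large hq hη (φ x) hcase.le
        rw [← hc2def, ← hCbdef] at this
        have hnn : 0 ≤ K*η*φ x^2 :=
          mul_nonneg (mul_nonneg hK0 hη.le) (sq_nonneg _)
        calc abs (|1 + φ x| ^ q - 1 - q * φ x - c2 * φ x ^ 2) ≤ Cb * |φ x| ^ q := this
          _ ≤ K*η*φ x^2 + Cb*|φ x|^q := by linarith only [hnn]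
    -- remainder
    have hRint : Integrable (fun x => |1 + φ x| ^ q - 1 - q * φ x - c2 * φ x ^ 2) μ :=
      ((hint_1q.sub (integrable_const 1)).sub (hintφ.const_mul q)).sub (hint_sq.const_mul c2)
    set R : ℝ := ∫ x, (|1 + φ x| ^ q - 1 - q * φ x - c2 * φ x ^ 2) ∂μ with hRdef
    have hI2 : Integrable (fun x => |1 + φ x| ^ q - 1) μ := hint_1q.sub (integrable_const 1)
    have hI3 : Integrable (fun x => |1 + φ x| ^ q - 1 - q * φ x) μ :=
      hI2.sub (hintφ.const_mul q)
    have hAR : A - m - c2*S = R := by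
      rw [hRdef,
        integral_sub hI3 (hint_sq.const_mul c2),
        integral_sub hI2 (hintφ.const_mul q),
        integral_sub hint_1q (integrable_const 1),
        integral_const, integral_const_mul, integral_const_mul, hmean]
      simp [← hAdef, ← hSdef, measureReal_def, ← hmdef, smul_eq_mul]
      try ring
    have hRbound : |R| ≤ K*η*S + Cb*T := by
      have h1 : |R| ≤ ∫ x, abs (|1 + φ x| ^ q - 1 - q * φ x - c2 * φ x ^ 2) ∂μ := by
        have := norm_integral_le_integral_norm
          (fun x => |1 + φ x| ^ q - 1 - q * φ x - c2 * φ x ^ 2) (μ := μ)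
        simpa [Real.norm_eq_abs, ← hRdef] using this
      have h2 : (∫ x, abs (|1 + φ x| ^ q - 1 - q * φ x - c2 * φ x ^ 2) ∂μ)
          ≤ ∫ x, (K*η*φ x^2 + Cb*|φ x|^q) ∂μ := by
        refine integral_mono hRint.abs ?_ hptwise
        exact ((hint_sq.const_mul (K*η)).add (hint_q.const_mul Cb))
      have h3 : (∫ x, (K*η*φ x^2 + Cb*|φ x|^q) ∂μ) = K*η*S + Cb*T := by
        rw [integral_add ((hint_sq.const_mul (K*η))) (hint_q.const_mul Cb),
          integral_const_mul, integral_const_mul, ← hSdef, ← hTdef]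
      linarith only [h1, h2, h3]
    -- Hölder : S ≤ B t²
    have hHolder : S ≤ B * t^2 := by
      have hH := eLpNorm_le_eLpNorm_mul_rpow_measure_univ (p := (2:ENNReal)) (q := p)
        h2le hφae
      have h2t : (2:ENNReal).toReal = (2:ℝ) := by norm_num
      have hexp : (0:ℝ) ≤ 1/(2:ENNReal).toReal - 1/p.toReal := by
        rw [hptr, h2t]
        have h1q : 1/q ≤ 1/2 := by
          rw [div_le_div_iff₀ hq0 (by norm_num : (0:ℝ) < 2)]; linarith
        linarith
      have hrhs_ne : eLpNorm φ p μ * μ Set.univ ^ (1/(2:ENNReal).toReal - 1/p.toReal) ≠ ⊤ := by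
        apply ENNReal.mul_ne_top hφq.2.ne
        exact (ENNReal.rpow_lt_top_of_nonneg hexp hfin.ne).ne
      have h2 : (eLpNorm φ 2 μ).toReal ≤ t * m ^ ((1:ℝ)/2 - 1/q) := by
        have := ENNReal.toReal_mono hrhs_ne hH
        rwa [ENNReal.toReal_mul, ← ENNReal.toReal_rpow, hptr, h2t, ← hmdef] at this
      have h3 : (eLpNorm φ 2 μ).toReal ^ 2 ≤ (t * m ^ ((1:ℝ)/2 - 1/q)) ^ 2 :=
        pow_le_pow_left₀ ENNReal.toReal_nonneg h2 2
      have h4' : (m ^ ((1:ℝ)/2 - 1/q)) ^ 2 = B := by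
        rw [← Real.rpow_two, ← Real.rpow_mul hm.le, hBdef]
        congr 1
        ring
      have h4 : (t * m ^ ((1:ℝ)/2 - 1/q)) ^ 2 = B * t^2 := by
        rw [mul_pow, h4']; ring
      rw [hSnorm] at h3
      linarith only [h3, h4]
    -- T ≤ δ^(q-2) t²
    have hδq2 : (0:ℝ) ≤ q - 2 := by linarith
    have hTle : T ≤ δ^(q-2) * t^2 := by
      have h1 : t ^ q = t^(q-2) * t^2 := by
        rw [show q = (q-2) + 2 by ring, Real.rpow_add htpos, Real.rpow_two]
        ring_nf
      have h2 : t^(q-2) ≤ δ^(q-2) := Real.rpow_le_rpow ht0 hδφ hδq2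
      calc T = t ^ q := hTnorm.symm
        _ = t^(q-2) * t^2 := h1
        _ ≤ δ^(q-2) * t^2 := mul_le_mul_of_nonneg_right h2 (sq_nonneg t)
    have hδpow1 : δ^(q-2) ≤ 1 := Real.rpow_le_one hδpos.le hδ1 hδq2
    -- error bounds
    have hErr : |A - m - c2*S| ≤ (K*η*B + Cb*δ^(q-2)) * t^2 := by
      rw [hAR]
      have e1 : K*η*S ≤ K*η*(B*t^2) :=
        mul_le_mul_of_nonneg_left hHolder (mul_nonneg hK0 hη.le)
      have e2 : Cb*T ≤ Cb*(δ^(q-2)*t^2) := mul_le_mul_of_nonneg_left hTle hCb.le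
      calc |R| ≤ K*η*S + Cb*T := hRbound
        _ ≤ K*η*(B*t^2) + Cb*(δ^(q-2)*t^2) := by linarith only [e1, e2]
        _ = (K*η*B + Cb*δ^(q-2)) * t^2 := by ring
    have hAmbound : |A - m| ≤ D0 * t^2 := by
      have h1 : |A - m| ≤ |A - m - c2*S| + c2*S := by
        have := abs_add_le (A - m - c2*S) (c2*S)
        have h2 : |c2*S| = c2*S := abs_of_nonneg (mul_nonneg hc2.le hS0)
        calc |A - m| = |(A - m - c2*S) + c2*S| := by ring_nf
          _ ≤ |A - m - c2*S| + |c2*S| := abs_add_le _ _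
          _ = |A - m - c2*S| + c2*S := by rw [h2]
      have h2 : c2*S ≤ c2*(B*t^2) := mul_le_mul_of_nonneg_left hHolder hc2.le
      have h3 : Cb*δ^(q-2)*t^2 ≤ Cb*t^2 := by
        refine mul_le_mul_of_nonneg_right ?_ (sq_nonneg t)
        calc Cb*δ^(q-2) ≤ Cb*1 := mul_le_mul_of_nonneg_left hδpow1 hCb.le
          _ = Cb := mul_one Cb
      have h4 : (K*η*B + Cb*δ^(q-2))*t^2 = K*η*B*t^2 + Cb*δ^(q-2)*t^2 := by ring
      have h5 : ((c2 + K*η)*B + Cb)*t^2 = c2*(B*t^2) + K*η*B*t^2 + Cb*t^2 := by ring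
      rw [hD0def, h5]
      rw [h4] at hErr
      linarith only [h1, h2, h3, hErr]
    have ht2δ : t^2 ≤ δ := by
      calc t^2 ≤ δ^2 := pow_le_pow_left₀ ht0 hδφ 2
        _ = δ*δ := sq δ
        _ ≤ 1*δ := mul_le_mul_of_nonneg_right hδ1 hδpos.le
        _ = δ := one_mul δ
    have hAm_half : |A - m| ≤ m/2 := by
      have h1 : D0*t^2 ≤ D0*δ := mul_le_mul_of_nonneg_left ht2δ hD0.le
      linarith only [h1, hδb, hAmbound]
    -- Taylor expansion of x ↦ x^(2/q) at m
    have hmem : A - m ∈ Icc (-(m/2)) (m/2) := by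
      have := abs_le.mp hAm_half
      exact ⟨this.1, this.2⟩
    have hTay := lq_aux_taylor_rpow (a := 2/q) hm (A - m) hmem
    rw [show m + (A - m) = A by ring] at hTay
    rw [← hc1def, ← hC2def] at hTay
    have hsq : (A - m)^2 ≤ (D0*t^2)^2 := by
      rw [← sq_abs (A - m)]
      exact pow_le_pow_left₀ (abs_nonneg _) hAmbound 2
    have hquad : C2 * (A - m)^2 ≤ (ε/3) * t^2 := by
      have h2 : t^2*t^2 ≤ δ*t^2 := mul_le_mul_of_nonneg_right ht2δ (sq_nonneg t)
      calc C2*(A-m)^2 ≤ C2*((D0*t^2)^2) := mul_le_mul_of_nonneg_left hsq hC2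
        _ = (C2*D0^2)*(t^2*t^2) := by ring
        _ ≤ (C2*D0^2)*(δ*t^2) :=
            mul_le_mul_of_nonneg_left h2 (mul_nonneg hC2 (sq_nonneg D0))
        _ = (C2*D0^2*δ)*t^2 := by ring
        _ ≤ (ε/3)*t^2 := mul_le_mul_of_nonneg_right hδc (sq_nonneg t)
    -- final assembly
    rw [hAnorm, hSnorm]
    have hkey : A^((2:ℝ)/q) - m^((2:ℝ)/q) - (q-1)*m^((2:ℝ)/q - 1)*S
        = (A^((2:ℝ)/q) - m^((2:ℝ)/q) - c1*(A-m)) + c1*(A - m - c2*S) := by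
      rw [hc1def, hc2def]
      field_simp
      ring
    rw [hkey]
    have hX : |A^((2:ℝ)/q) - m^((2:ℝ)/q) - c1*(A-m)| ≤ (ε/3)*t^2 := hTay.trans hquad
    have hY : |c1*(A - m - c2*S)| ≤ c1*((K*η*B + Cb*δ^(q-2))*t^2) := by
      rw [abs_mul, abs_of_pos hc1]
      exact mul_le_mul_of_nonneg_left hErr hc1.le
    have hY2 : c1*((K*η*B + Cb*δ^(q-2))*t^2) = (c1*K*B*η)*t^2 + (c1*Cb*δ^(q-2))*t^2 := by ring
    have hY3 : (c1*K*B*η)*t^2 ≤ (ε/3)*t^2 := mul_le_mul_of_nonneg_right hηε (sq_nonneg t)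
    have hY4 : (c1*Cb*δ^(q-2))*t^2 ≤ (ε/3)*t^2 := mul_le_mul_of_nonneg_right hδd (sq_nonneg t)
    have htotal : ε*t^2 = (ε/3)*t^2 + (ε/3)*t^2 + (ε/3)*t^2 := by ring
    calc |(A^((2:ℝ)/q) - m^((2:ℝ)/q) - c1*(A-m)) + c1*(A - m - c2*S)|
        ≤ |A^((2:ℝ)/q) - m^((2:ℝ)/q) - c1*(A-m)| + |c1*(A - m - c2*S)| := abs_add_le _ _
      _ ≤ ε*t^2 := by linarith only [hX, hY, hY2, hY3, hY4, htotal]
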